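/- Let $u: F(\mathbb{Z}^2) \to \mathbb{C}$ be circle centers such that for every face $(m,n)$, the point $u_{m,n}$ is the incenter of the tangential quadrilateral formed by $u_{m+1,n}, u_{m,n+1}, u_{m-1,n}, u_{m,n-1}$ (i.e., $u_{m,n}$ lies on all four interior angle bisectors). Define $z_r = $ intersection of lines $u_{m,n}u_{m+1,n+1}$ and $u_{m,n+1}u_{m+1,n}$, and $z_l = $ intersection of lines $u_{m,n}u_{m-1,n+1}$ and $u_{m,n+1}u_{m-1,n}$. Then $z_r$ is the image of $z_l$ under reflection across the line through $u_{m,n}$ and $u_{m,n+1}$. -/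

import Mathlib

open Complex

/-- Reflection of `z` across the line through `a` and `b` (for `a ≠ b`). -/
noncomputable def reflLine (a b z : ℂ) : ℂ :=
  a + ((b - a) / (starRingEnd ℂ) (b - a)) * (starRingEnd ℂ) (z - a)

lemma aux_unique (v w : ℂ) (h : ((starRingEnd ℂ) v * w).im ≠ 0)
    (α β : ℝ) (heq : (α : ℂ) * v = (β : ℂ) * w) : (α : ℂ) * v = 0 := by
  have hv : v ≠ 0 := by rintro rfl; simp at h
  have h2 : (starRingEnd ℂ) v * ((α : ℂ) * v) = (β : ℂ) * ((starRingEnd ℂ) v * w) := by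
    rw [heq]; ring
  have hl : ((starRingEnd ℂ) v * ((α : ℂ) * v)).im = 0 := by
    have : (starRingEnd ℂ) v * ((α : ℂ) * v) = ((α * Complex.normSq v : ℝ) : ℂ) := by
      push_cast
      rw [show ((Complex.normSq v : ℝ) : ℂ) = (starRingEnd ℂ) v * v from by
        rw [mul_comm, Complex.mul_conj]]
      ring
    rw [this, Complex.ofReal_im]
  have hr : ((β : ℂ) * ((starRingEnd ℂ) v * w)).im = β * ((starRingEnd ℂ) v * w).im := by
    simp [Complex.mul_im]
  have hβ : β = 0 := by
    have := hl
    rw [h2, hr] at this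
    rcases mul_eq_zero.mp this with h' | h'
    · exact h'
    · exact absurd h' h
  rw [heq, hβ]; simp

/-- if each `u_{m,n}` is the incenter of the quadrilateral of its four
neighbors (expressed via the reflection across the line `u_{m,n} u_{m,n+1}` mapping
the relevant rays to each other), then the intersection `z_r` of the diagonals
`u_{m,n}u_{m+1,n+1}` and `u_{m,n+1}u_{m+1,n}` is the reflection across the line
`u_{m,n}u_{m,n+1}` of the intersection `z_l` of `u_{m,n}u_{m-1,n+1}` and
`u_{m,n+1}u_{m-1,n}`. -/
theorem stmt15 (u : ℤ × ℤ → ℂ) (m n : ℤ)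
    (hab : u (m, n + 1) ≠ u (m, n))
    (hbis1 : ∃ t : ℝ, 0 < t ∧
      reflLine (u (m, n)) (u (m, n + 1)) (u (m + 1, n + 1)) - u (m, n)
        = (t : ℂ) * (u (m - 1, n + 1) - u (m, n)))
    (hbis2 : ∃ t : ℝ, 0 < t ∧
      reflLine (u (m, n)) (u (m, n + 1)) (u (m + 1, n)) - u (m, n + 1)
        = (t : ℂ) * (u (m - 1, n) - u (m, n + 1)))
    (zr zl : ℂ)
    (hzr1 : ∃ s : ℝ, zr = u (m, n) + (s : ℂ) * (u (m + 1, n + 1) - u (m, n)))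
    (hzr2 : ∃ s : ℝ, zr = u (m, n + 1) + (s : ℂ) * (u (m + 1, n) - u (m, n + 1)))
    (hzl1 : ∃ s : ℝ, zl = u (m, n) + (s : ℂ) * (u (m - 1, n + 1) - u (m, n)))
    (hzl2 : ∃ s : ℝ, zl = u (m, n + 1) + (s : ℂ) * (u (m - 1, n) - u (m, n + 1)))
    (hnpr : ((starRingEnd ℂ) (u (m + 1, n + 1) - u (m, n)) *
      (u (m + 1, n) - u (m, n + 1))).im ≠ 0)
    (hnpl : ((starRingEnd ℂ) (u (m - 1, n + 1) - u (m, n)) *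
      (u (m - 1, n) - u (m, n + 1))).im ≠ 0) :
    reflLine (u (m, n)) (u (m, n + 1)) zl = zr := by
  set a := u (m, n) with ha
  set b := u (m, n + 1) with hb
  set v1 := u (m + 1, n + 1) - a with hv1
  set v2 := u (m + 1, n) - b with hv2
  set w1 := u (m - 1, n + 1) - a with hw1
  set w2 := u (m - 1, n) - b with hw2
  have hba : b - a ≠ 0 := sub_ne_zero.mpr hab
  have hcb : (starRingEnd ℂ) (b - a) ≠ 0 := by
    intro h
    apply hba
    have := congrArg (starRingEnd ℂ) h
    simpa using this
  set c := (b - a) / (starRingEnd ℂ) (b - a) with hc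
  have hcc : c * (starRingEnd ℂ) c = 1 := by
    rw [hc, map_div₀, Complex.conj_conj, div_mul_div_comm, mul_comm]
    exact div_self (mul_ne_zero hcb hba)
  obtain ⟨t1, ht1, h1⟩ := hbis1
  obtain ⟨t2, ht2, h2⟩ := hbis2
  have ht1' : (t1 : ℂ) ≠ 0 := by exact_mod_cast ht1.ne'
  have ht2' : (t2 : ℂ) ≠ 0 := by exact_mod_cast ht2.ne'
  -- h1 : c * conj v1 = t1 * w1
  have h1' : c * (starRingEnd ℂ) v1 = (t1 : ℂ) * w1 := by
    have := h1
    unfold reflLine at this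
    rw [← hc] at this
    linear_combination this
  have h2' : c * (starRingEnd ℂ) (v1) = (t1:ℂ) * w1 := h1'
  -- conjugate and multiply by c:
  have k1 : c * (starRingEnd ℂ) w1 = (t1 : ℂ)⁻¹ * v1 := by
    have hcj : (starRingEnd ℂ) c * v1 = (t1 : ℂ) * (starRingEnd ℂ) w1 := by
      have := congrArg (starRingEnd ℂ) h1'
      simpa [map_mul, Complex.conj_conj, Complex.conj_ofReal] using this
    have : v1 = (t1 : ℂ) * (c * (starRingEnd ℂ) w1) := by
      calc v1 = (c * (starRingEnd ℂ) c) * v1 := by rw [hcc]; ring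
        _ = c * ((starRingEnd ℂ) c * v1) := by ring
        _ = (t1 : ℂ) * (c * (starRingEnd ℂ) w1) := by rw [hcj]; ring
    field_simp [this]
    linear_combination -this
  -- h2 : a + c * conj (u(m+1,n) - a) - b = t2 * w2
  have h2'' : c * (starRingEnd ℂ) (u (m + 1, n) - a) = (t2 : ℂ) * w2 + (b - a) := by
    have := h2
    unfold reflLine at this
    rw [← hc] at this
    linear_combination this
  have hcba : c * (starRingEnd ℂ) (b - a) = b - a := by
    rw [hc]; exact div_mul_cancel₀ _ hcb
  have k2 : c * (starRingEnd ℂ) w2 = (t2 : ℂ)⁻¹ * v2 := by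
    have hcj : (starRingEnd ℂ) c * (u (m + 1, n) - a)
        = (t2 : ℂ) * (starRingEnd ℂ) w2 + (starRingEnd ℂ) (b - a) := by
      have := congrArg (starRingEnd ℂ) h2''
      simpa [map_mul, map_add, Complex.conj_conj, Complex.conj_ofReal] using this
    have hmain : u (m + 1, n) - a = (t2 : ℂ) * (c * (starRingEnd ℂ) w2) + (b - a) := by
      calc u (m + 1, n) - a = (c * (starRingEnd ℂ) c) * (u (m + 1, n) - a) := by
            rw [hcc]; ring
        _ = c * ((starRingEnd ℂ) c * (u (m + 1, n) - a)) := by ring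
        _ = (t2 : ℂ) * (c * (starRingEnd ℂ) w2) + c * (starRingEnd ℂ) (b - a) := by
            rw [hcj]; ring
        _ = (t2 : ℂ) * (c * (starRingEnd ℂ) w2) + (b - a) := by rw [hcba]
    have hv2eq : (t2 : ℂ) * (c * (starRingEnd ℂ) w2) = v2 := by
      rw [hv2]; linear_combination -hmain
    exact ((inv_mul_eq_iff_eq_mul₀ ht2').mpr hv2eq.symm).symm
  obtain ⟨s1, hs1⟩ := hzl1
  obtain ⟨s2, hs2⟩ := hzl2
  obtain ⟨r1, hr1⟩ := hzr1
  obtain ⟨r2, hr2⟩ := hzr2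
  set p := reflLine a b zl with hp
  have hp1 : p = a + ((s1 * t1⁻¹ : ℝ) : ℂ) * v1 := by
    rw [hp]
    unfold reflLine
    rw [← hc, hs1]
    have : (starRingEnd ℂ) (a + (s1 : ℂ) * w1 - a) = (s1 : ℂ) * (starRingEnd ℂ) w1 := by
      simp [Complex.conj_ofReal]
    rw [this]
    push_cast
    linear_combination (s1 : ℂ) * k1
  have hp2 : p = b + ((s2 * t2⁻¹ : ℝ) : ℂ) * v2 := by
    rw [hp]
    unfold reflLine
    rw [← hc, hs2]
    have : (starRingEnd ℂ) (b + (s2 : ℂ) * w2 - a)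
        = (starRingEnd ℂ) (b - a) + (s2 : ℂ) * (starRingEnd ℂ) w2 := by
      rw [show b + (s2 : ℂ) * w2 - a = (b - a) + (s2 : ℂ) * w2 from by ring]
      simp [Complex.conj_ofReal]
    rw [this]
    push_cast
    linear_combination (s2 : ℂ) * k2 + hcba
  -- p - zr is a real multiple of v1 and of v2
  have hd1 : p - zr = ((s1 * t1⁻¹ - r1 : ℝ) : ℂ) * v1 := by
    rw [hp1, hr1]; push_cast; ring
  have hd2 : p - zr = ((s2 * t2⁻¹ - r2 : ℝ) : ℂ) * v2 := by
    rw [hp2, hr2]; push_cast; ring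
  have := aux_unique v1 v2 hnpr _ _ (hd1 ▸ hd2 ▸ rfl : ((s1 * t1⁻¹ - r1 : ℝ) : ℂ) * v1 = ((s2 * t2⁻¹ - r2 : ℝ) : ℂ) * v2)
  have hz : p - zr = 0 := by rw [hd1, this]
  exact sub_eq_zero.mp hz
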